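/- Let A be a commutative ℚ-algebra, let λ ∈ A, and for a ∈ A set τ_n(a) = (1/n!)·∏_{j=0}^{n−1}(a − j·λ). Then for all m, n ∈ ℕ, τ_m(a)·τ_n(a) = ∑_{k=0}^{m} binom(m+n−k, m)·binom(m, k)·λ^k·τ_{m+n−k}(a). (In particular, for a delta series f(t) in C[[t]] over a ℚ-algebra C, the sequence τ_n(f(t)) satisfies the λ-divided power multiplication rule.) -/

import Mathlib

open Finset

/-- `τ_n(a) = (1/n!)·∏_{j=0}^{n−1}(a − j·λ)` in a commutative `ℚ`-algebra. -/
def tau {A : Type*} [CommRing A] [Algebra ℚ A] (lam : A) (n : ℕ) (a : A) : A :=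
  ((n.factorial : ℚ)⁻¹) • ∏ j ∈ Finset.range n, (a - (j : A) * lam)

lemma nat_pascal_step (m n i : ℕ) :
    (i+1).factorial * m.choose (i+1) * (n+1).choose (i+1) =
      i.factorial * m.choose i * n.choose i * (m - i) +
      (i+1).factorial * m.choose (i+1) * n.choose (i+1) := by
  rw [Nat.choose_succ_succ, Nat.mul_add]
  congr 1
  have h := Nat.choose_succ_right_eq m i
  calc (i+1).factorial * m.choose (i+1) * n.choose i
      = i.factorial * (m.choose (i+1) * (i+1)) * n.choose i := by
        rw [Nat.factorial_succ]; ring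
    _ = i.factorial * (m.choose i * (m - i)) * n.choose i := by rw [h]
    _ = i.factorial * m.choose i * n.choose i * (m - i) := by ring

lemma key {A : Type*} [CommRing A] (lam a : A) (m n : ℕ) :
    (∏ j ∈ range m, (a - (j : A) * lam)) * (∏ j ∈ range n, (a - (j : A) * lam)) =
      ∑ k ∈ range (m+1),
        ((k.factorial * m.choose k * n.choose k : ℕ) : A) * lam ^ k *
          ∏ j ∈ range (m + n - k), (a - (j : A) * lam) := by
  induction n with
  | zero =>
    rw [Finset.sum_eq_single 0]
    · simp
    · intro k hk hk0
      have : Nat.choose 0 k = 0 := Nat.choose_eq_zero_of_lt (Nat.pos_of_ne_zero hk0)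
      simp [this]
    · intro h; exact absurd (Finset.mem_range.mpr (Nat.succ_pos m)) h
  | succ n ih =>
    have split : ∀ k ∈ range (m+1),
        ((k.factorial * m.choose k * n.choose k : ℕ) : A) * lam ^ k *
            (∏ j ∈ range (m + n - k), (a - (j : A) * lam)) * (a - (n : A) * lam) =
          ((k.factorial * m.choose k * n.choose k : ℕ) : A) * lam ^ k *
            (∏ j ∈ range (m + (n+1) - k), (a - (j : A) * lam)) +
          ((k.factorial * m.choose k * n.choose k * (m - k) : ℕ) : A) * lam ^ (k+1) *
            (∏ j ∈ range (m + n - k), (a - (j : A) * lam)) := by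
      intro k hk
      have hkm : k ≤ m := Nat.lt_succ_iff.mp (Finset.mem_range.mp hk)
      have h2 : (a - (n : A) * lam)
          = (a - ((m + n - k : ℕ) : A) * lam) + ((m - k : ℕ) : A) * lam := by
        rw [show m + n - k = n + (m - k) by omega]; push_cast; ring
      have h3 : m + (n+1) - k = (m + n - k) + 1 := by omega
      rw [h2, mul_add, h3, Finset.prod_range_succ]
      push_cast
      ring
    calc (∏ j ∈ range m, (a - (j : A) * lam)) * ∏ j ∈ range (n+1), (a - (j : A) * lam)
        = ((∏ j ∈ range m, (a - (j : A) * lam)) * ∏ j ∈ range n, (a - (j : A) * lam)) *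
            (a - (n : A) * lam) := by
          rw [Finset.prod_range_succ]; ring
      _ = ∑ k ∈ range (m+1),
            ((k.factorial * m.choose k * n.choose k : ℕ) : A) * lam ^ k *
              (∏ j ∈ range (m + n - k), (a - (j : A) * lam)) * (a - (n : A) * lam) := by
          rw [ih, Finset.sum_mul]
      _ = (∑ k ∈ range (m+1),
            ((k.factorial * m.choose k * n.choose k : ℕ) : A) * lam ^ k *
              (∏ j ∈ range (m + (n+1) - k), (a - (j : A) * lam))) +
          ∑ k ∈ range (m+1),
            ((k.factorial * m.choose k * n.choose k * (m - k) : ℕ) : A) * lam ^ (k+1) *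
              (∏ j ∈ range (m + n - k), (a - (j : A) * lam)) := by
          rw [Finset.sum_congr rfl split, Finset.sum_add_distrib]
      _ = ∑ k ∈ range (m+1),
            ((k.factorial * m.choose k * (n+1).choose k : ℕ) : A) * lam ^ k *
              ∏ j ∈ range (m + (n+1) - k), (a - (j : A) * lam) := by
          rw [Finset.sum_range_succ' (fun k => ((k.factorial * m.choose k * n.choose k : ℕ) : A) * lam ^ k *
              (∏ j ∈ range (m + (n+1) - k), (a - (j : A) * lam)))]
          rw [Finset.sum_range_succ (fun k => ((k.factorial * m.choose k * n.choose k * (m - k) : ℕ) : A) * lam ^ (k+1) *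
              (∏ j ∈ range (m + n - k), (a - (j : A) * lam)))]
          rw [Finset.sum_range_succ' (fun k => ((k.factorial * m.choose k * (n+1).choose k : ℕ) : A) * lam ^ k *
              (∏ j ∈ range (m + (n+1) - k), (a - (j : A) * lam)))]
          simp only [Nat.sub_self, Nat.mul_zero, Nat.cast_zero, zero_mul, add_zero]
          rw [add_right_comm, ← Finset.sum_add_distrib]
          congr 1
          · apply Finset.sum_congr rfl
            intro i _
            rw [show m + (n+1) - (i+1) = m + n - i by omega, nat_pascal_step m n i]
            push_cast
            ring
          · simp

lemma nat_coeff (m n k : ℕ) (hk : k ≤ m) :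
    k.factorial * n.choose k * (m + n - k).factorial =
      (m + n - k).choose m * m.factorial * n.factorial := by
  by_cases hkn : k ≤ n
  · have h1 : m + n - k = m + (n - k) := by omega
    rw [h1]
    apply Nat.eq_of_mul_eq_mul_right (Nat.factorial_pos (n - k))
    calc k.factorial * n.choose k * (m + (n - k)).factorial * (n - k).factorial
        = (n.choose k * k.factorial * (n - k).factorial) * (m + (n - k)).factorial := by ring
      _ = n.factorial * (m + (n - k)).factorial := by rw [Nat.choose_mul_factorial_mul_factorial hkn]
      _ = ((m + (n - k)).choose m * m.factorial * (n - k).factorial) * n.factorial := by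
          have h4 := Nat.add_choose_mul_factorial_mul_factorial (n - k) m
          rw [add_comm (n - k) m] at h4
          rw [show (m + (n - k)).choose m * m.factorial * (n - k).factorial = (m + (n-k)).factorial from by rw [← h4]; ring]
          ring
      _ = (m + (n - k)).choose m * m.factorial * n.factorial * (n - k).factorial := by ring
  · have h1 : n.choose k = 0 := Nat.choose_eq_zero_of_lt (by omega)
    have h2 : (m + n - k).choose m = 0 := Nat.choose_eq_zero_of_lt (by omega)
    rw [h1, h2]; ring

theorem tau_mul_tau {A : Type*} [CommRing A] [Algebra ℚ A] (lam : A) (a : A) (m n : ℕ) :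
    tau lam m a * tau lam n a =
      ∑ k ∈ Finset.range (m + 1),
        ((m + n - k).choose m : A) * (m.choose k : A) * lam ^ k * tau lam (m + n - k) a := by
  have cast_mul : ∀ (c : ℕ) (x : A), (c : A) * x = (c : ℚ) • x := by
    intro c x; rw [Algebra.smul_def, map_natCast]
  unfold tau
  rw [smul_mul_smul_comm, key, Finset.smul_sum]
  apply Finset.sum_congr rfl
  intro k hk
  have hkm : k ≤ m := Nat.lt_succ_iff.mp (Finset.mem_range.mp hk)
  have hnat : k.factorial * m.choose k * n.choose k * (m+n-k).factorial =
      (m+n-k).choose m * m.choose k * (m.factorial * n.factorial) := by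
    calc k.factorial * m.choose k * n.choose k * (m+n-k).factorial
        = m.choose k * (k.factorial * n.choose k * (m+n-k).factorial) := by ring
      _ = m.choose k * ((m+n-k).choose m * m.factorial * n.factorial) := by
          rw [nat_coeff m n k hkm]
      _ = (m+n-k).choose m * m.choose k * (m.factorial * n.factorial) := by ring
  have hq : ((m.factorial : ℚ)⁻¹ * (n.factorial : ℚ)⁻¹) *
        ((k.factorial * m.choose k * n.choose k : ℕ) : ℚ) =
      (((m+n-k).choose m * m.choose k : ℕ) : ℚ) * ((m+n-k).factorial : ℚ)⁻¹ := by
    have h1 : (m.factorial : ℚ) ≠ 0 := Nat.cast_ne_zero.mpr m.factorial_ne_zero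
    have h2 : (n.factorial : ℚ) ≠ 0 := Nat.cast_ne_zero.mpr n.factorial_ne_zero
    have h3 : ((m+n-k).factorial : ℚ) ≠ 0 := Nat.cast_ne_zero.mpr (m+n-k).factorial_ne_zero
    have hnatQ : ((k.factorial : ℚ)) * (m.choose k) * (n.choose k) * ((m+n-k).factorial) =
        ((m+n-k).choose m) * (m.choose k) * ((m.factorial : ℚ) * (n.factorial)) := by
      exact_mod_cast hnat
    field_simp
    push_cast
    linear_combination hnatQ
  calc ((m.factorial : ℚ)⁻¹ * (n.factorial : ℚ)⁻¹) •
        (((k.factorial * m.choose k * n.choose k : ℕ) : A) * lam ^ k *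
          ∏ j ∈ range (m + n - k), (a - (j : A) * lam))
      = (((m.factorial : ℚ)⁻¹ * (n.factorial : ℚ)⁻¹) *
          ((k.factorial * m.choose k * n.choose k : ℕ) : ℚ)) •
          (lam ^ k * ∏ j ∈ range (m + n - k), (a - (j : A) * lam)) := by
        rw [mul_assoc, cast_mul, smul_smul]
    _ = ((((m+n-k).choose m * m.choose k : ℕ) : ℚ) * ((m+n-k).factorial : ℚ)⁻¹) •
          (lam ^ k * ∏ j ∈ range (m + n - k), (a - (j : A) * lam)) := by rw [hq]
    _ = ((m + n - k).choose m : A) * (m.choose k : A) * lam ^ k *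
          (((m + n - k).factorial : ℚ)⁻¹ • ∏ j ∈ range (m + n - k), (a - (j : A) * lam)) := by
        rw [mul_smul, ← mul_smul_comm, ← cast_mul]
        push_cast
        ring
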